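/- arXiv:1312.2863 — 3 statements merged into one kernel-verified Lean document; each statement's English description precedes it below -/
import Mathlib

section
/- Let {X(s,t) : s,t ≥ 0} be a centered homogeneous Gaussian random field satisfying conditions (A1) and (A2), let r ≥ 0 be a constant, let a > 0, set q1 = a·u^{−2/α1}, q2 = a·u^{−2/α2}, and let T = T(u) → ∞ as u → ∞. Then there exists ε > 0 such that (m(u)/(q1·q2)) · Σ_{(j,k)∈ℤ², 0 < max(|j·q1|, |k·q2|) < ε} [ (1 − r(j·q1, k·q2))·(r/log T) · (1 − (r(j·q1, k·q2) + (1 − r(j·q1, k·q2))·r/log T)²)^{−1/2} · exp( −u²/(1 + r(j·q1, k·q2) + (1 − r(j·q1, k·q2))·r/log T) ) ] → 0 as u → ∞. -/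
open MeasureTheory ProbabilityTheory Filter Set Asymptotics Topology
open scoped ProbabilityTheory

noncomputable section

/-- The survival function `Ψ` of the standard normal distribution. -/
def stdGaussSurvival (u : ℝ) : ℝ := ((gaussianReal 0 1) (Set.Ioi u)).toReal

/-- A centered homogeneous (stationary) Gaussian random field on `ℝ²` with unit
variance, correlation function `ρ` (so that `Cov(X(p), X(q)) = ρ(p - q)`) and
a.s. continuous sample paths. -/
structure IsHomogGaussianField {Ω : Type} [MeasureSpace Ω]
    (X : ℝ × ℝ → Ω → ℝ) (ρ : ℝ × ℝ → ℝ) : Prop where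
  meas : ∀ p, Measurable (X p)
  gaussian : ∀ (n : ℕ) (c : Fin n → ℝ) (p : Fin n → ℝ × ℝ),
    ∃ v : NNReal,
      Measure.map (fun ω => ∑ i, c i * X (p i) ω) ℙ = gaussianReal 0 v
  centered : ∀ p, ∫ ω, X p ω = 0
  cov : ∀ p q, ∫ ω, X p ω * X q ω = ρ (p - q)
  corr_self : ρ 0 = 1
  ae_cont : ∀ᵐ ω ∂(ℙ : Measure Ω), Continuous fun p => X p ω

/-- Condition A1 : `ρ(s,t) = 1 - |s|^{α₁} - |t|^{α₂} + o(|s|^{α₁} + |t|^{α₂})`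
as `(s,t) → (0,0)`, with `α₁, α₂ ∈ (0,2]`. -/
def CondA1 (ρ : ℝ × ℝ → ℝ) (α₁ α₂ : ℝ) : Prop :=
  α₁ ∈ Set.Ioc (0:ℝ) 2 ∧ α₂ ∈ Set.Ioc (0:ℝ) 2 ∧
    Tendsto (fun p : ℝ × ℝ =>
        (ρ p - (1 - |p.1| ^ α₁ - |p.2| ^ α₂)) / (|p.1| ^ α₁ + |p.2| ^ α₂))
      (𝓝[≠] (0 : ℝ × ℝ)) (𝓝 0)

/-- Condition A2 : `ρ(s,t) < 1` for `(s,t) ≠ (0,0)`. -/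
def CondA2 (ρ : ℝ × ℝ → ℝ) : Prop := ∀ p : ℝ × ℝ, p ≠ 0 → ρ p < 1

/-- Condition A3 : `sup_{s²+t² = d²} |ρ(s,t)·log d - r| → 0` as `d → ∞`. -/
def CondA3 (ρ : ℝ × ℝ → ℝ) (r : ℝ) : Prop :=
  ∀ ε > 0, ∃ D : ℝ, ∀ d ≥ D, ∀ s t : ℝ,
    s ^ 2 + t ^ 2 = d ^ 2 → |ρ (s, t) * Real.log d - r| < ε

variable {Ω : Type} [MeasureSpace Ω]

/-- `P(sup_{p ∈ S} X(p) ≤ u)`. -/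
def pBelow (X : ℝ × ℝ → Ω → ℝ) (S : Set (ℝ × ℝ)) (u : ℝ) : ℝ :=
  (ℙ {ω | ∀ p ∈ S, X p ω ≤ u}).toReal

/-- `P(sup_{p ∈ S} X(p) > u)`. -/
def pExceed (X : ℝ × ℝ → Ω → ℝ) (S : Set (ℝ × ℝ)) (u : ℝ) : ℝ :=
  (ℙ {ω | ∃ p ∈ S, u < X p ω}).toReal

/-- The unit square `[0,1]²`. -/
def unitSq : Set (ℝ × ℝ) := Set.Icc 0 1 ×ˢ Set.Icc 0 1

/-- The scaling functions `m₁, m₂` : positive, tending to `∞`, with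
`m₁(u)·m₂(u)·P(sup_{[0,1]²} X > u) → 1` and `log mᵢ(u) = u²/4 + o(u²)`. -/
def GoodScaling (X : ℝ × ℝ → Ω → ℝ) (m₁ m₂ : ℝ → ℝ) : Prop :=
  (∀ u, 0 < m₁ u) ∧ (∀ u, 0 < m₂ u) ∧
    Tendsto m₁ atTop atTop ∧ Tendsto m₂ atTop atTop ∧
    Tendsto (fun u => m₁ u * m₂ u * pExceed X unitSq u) atTop (𝓝 1) ∧
    (fun u => Real.log (m₁ u) - u ^ 2 / 4) =o[atTop] (fun u : ℝ => u ^ 2) ∧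
    (fun u => Real.log (m₂ u) - u ^ 2 / 4) =o[atTop] (fun u : ℝ => u ^ 2)

/-- The closed Euclidean ball `B(0,x)` in `ℝ²`. -/
def euclBall (x : ℝ) : Set (ℝ × ℝ) := {p | Real.sqrt (p.1 ^ 2 + p.2 ^ 2) ≤ x}


section AuxLemmas
open Real Filter

lemma aux_exp_rpow_le {c α : ℝ} (hc : 0 < c) (hα : 0 < α) {x : ℝ} (hx : 1 ≤ x) :
    Real.exp (-(c * x ^ α)) ≤ ((Nat.factorial (Nat.ceil (2/α)) : ℝ) / c ^ (Nat.ceil (2/α))) * (x ^ 2)⁻¹ := by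
  set m := Nat.ceil (2/α) with hm
  have hx0 : (0:ℝ) < x := lt_of_lt_of_le one_pos hx
  have hxα : (0:ℝ) ≤ c * x ^ α := by positivity
  have h1 : (c * x ^ α) ^ m / (Nat.factorial m : ℝ) ≤ Real.exp (c * x ^ α) :=
    Real.pow_div_factorial_le_exp _ hxα m
  have h2 : x ^ (2:ℕ) ≤ (x ^ α) ^ m := by
    rw [← Real.rpow_natCast (x ^ α) m, ← Real.rpow_mul hx0.le,
      ← Real.rpow_natCast x 2]
    refine Real.rpow_le_rpow_of_exponent_le hx ?_
    have h := Nat.le_ceil (2/α)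
    have h2 := (div_le_iff₀ hα).mp h
    push_cast
    nlinarith
  have hfac : (0:ℝ) < (Nat.factorial m : ℝ) := by positivity
  have key : x ^ (2:ℕ) * c ^ m / (Nat.factorial m : ℝ) ≤ Real.exp (c * x ^ α) := by
    calc x ^ (2:ℕ) * c ^ m / (Nat.factorial m : ℝ)
        ≤ (x ^ α) ^ m * c ^ m / (Nat.factorial m : ℝ) := by
          gcongr
      _ = (c * x ^ α) ^ m / (Nat.factorial m : ℝ) := by rw [mul_pow]; ring
      _ ≤ _ := h1
  have hpos : (0:ℝ) < x ^ (2:ℕ) * c ^ m / (Nat.factorial m : ℝ) := by positivity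
  rw [Real.exp_neg]
  calc (Real.exp (c * x ^ α))⁻¹
      ≤ (x ^ (2:ℕ) * c ^ m / (Nat.factorial m : ℝ))⁻¹ := by
        exact inv_anti₀ hpos key
    _ = ((Nat.factorial m : ℝ) / c ^ m) * (x ^ 2)⁻¹ := by
        field_simp

lemma summable_exp_int {c α : ℝ} (hc : 0 < c) (hα : 0 < α) :
    Summable (fun n : ℤ => Real.exp (-(c * |(n : ℝ)| ^ α))) := by
  have hnat : Summable (fun n : ℕ => Real.exp (-(c * (n : ℝ) ^ α))) := by
    refine summable_of_isBigO_nat (Real.summable_nat_pow_inv.mpr one_lt_two) ?_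
    rw [Asymptotics.isBigO_iff]
    refine ⟨(Nat.factorial (Nat.ceil (2/α)) : ℝ) / c ^ (Nat.ceil (2/α)), ?_⟩
    filter_upwards [eventually_ge_atTop 1] with n hn
    have hn1 : (1:ℝ) ≤ (n:ℝ) := by exact_mod_cast hn
    have := aux_exp_rpow_le hc hα hn1
    rw [Real.norm_eq_abs, Real.norm_eq_abs, abs_of_nonneg (Real.exp_pos _).le,
      abs_of_nonneg (by positivity)]
    calc Real.exp (-(c * (n:ℝ) ^ α)) ≤ _ := this
      _ = _ := by ring
  refine Summable.of_nat_of_neg ?_ ?_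
  · refine hnat.congr fun n => ?_
    simp [abs_of_nonneg (Nat.cast_nonneg n : (0:ℝ) ≤ n)]
  · refine hnat.congr fun n => ?_
    push_cast
    simp

lemma summable_exp_prod {b1 b2 α1 α2 : ℝ} (hb1 : 0 < b1) (hb2 : 0 < b2)
    (hα1 : 0 < α1) (hα2 : 0 < α2) :
    Summable (fun jk : ℤ × ℤ =>
      Real.exp (-((b1 * |(jk.1 : ℝ)| ^ α1 + b2 * |(jk.2 : ℝ)| ^ α2) / 32))) := by
  have h := (summable_exp_int (c := b1/32) (by positivity) hα1).mul_of_nonneg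
    (summable_exp_int (c := b2/32) (by positivity) hα2)
    (fun n => (Real.exp_pos _).le) (fun n => (Real.exp_pos _).le)
  refine h.congr fun jk => ?_
  rw [← Real.exp_add]
  congr 1
  ring

open MeasureTheory ProbabilityTheory in
lemma psi_lb' {u : ℝ} (hu : 1 ≤ u) :
    u⁻¹ * Real.exp (-(u^2)/2) ≤ 23 * ((gaussianReal 0 1) (Set.Ioi u)).toReal := by
  have hu0 : 0 < u := lt_of_lt_of_le one_pos hu
  have hui : u⁻¹ ≤ 1 := by
    rw [inv_le_one_iff₀]; right; exact hu
  have heq : ((gaussianReal 0 1) (Set.Ioi u)).toReal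
      = ∫ x in Set.Ioi u, gaussianPDFReal 0 1 x := by
    rw [gaussianReal_apply_eq_integral 0 one_ne_zero, ENNReal.toReal_ofReal]
    exact setIntegral_nonneg measurableSet_Ioi fun x _ => gaussianPDFReal_nonneg _ _ _
  set c0 : ℝ := (Real.sqrt (2 * Real.pi))⁻¹ * Real.exp (-(u + u⁻¹)^2/2) with hc0
  have hpdf : ∀ x : ℝ, gaussianPDFReal 0 1 x
      = (Real.sqrt (2 * Real.pi))⁻¹ * Real.exp (-x^2/2) := by
    intro x
    simp [gaussianPDFReal]
  have step2 : u⁻¹ * c0 ≤ ∫ x in Set.Ioc u (u + u⁻¹), gaussianPDFReal 0 1 x := by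
    have hconst : ∫ _x in Set.Ioc u (u + u⁻¹), c0 = u⁻¹ * c0 := by
      rw [setIntegral_const, measureReal_def, Real.volume_Ioc, smul_eq_mul]
      congr 1
      rw [show u + u⁻¹ - u = u⁻¹ by ring, ENNReal.toReal_ofReal (by positivity)]
    rw [← hconst]
    refine setIntegral_mono_on ((integrableOn_const_iff (C := c0)).mpr ?_)
      ((integrable_gaussianPDFReal 0 1).integrableOn) measurableSet_Ioc ?_
    · right; rw [Real.volume_Ioc]; exact ENNReal.ofReal_lt_top
    · intro x hx
      rw [hpdf x, hc0]
      have hx1 : u < x := hx.1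
      have hx2 : x ≤ u + u⁻¹ := hx.2
      refine mul_le_mul_of_nonneg_left ?_ (by positivity)
      exact Real.exp_le_exp.mpr (by nlinarith)
  have step1 : ∫ x in Set.Ioc u (u + u⁻¹), gaussianPDFReal 0 1 x
      ≤ ∫ x in Set.Ioi u, gaussianPDFReal 0 1 x := by
    refine setIntegral_mono_set ((integrable_gaussianPDFReal 0 1).integrableOn)
      (Filter.Eventually.of_forall fun x => gaussianPDFReal_nonneg _ _ _)
      (HasSubset.Subset.eventuallyLE ?_)
    exact Set.Ioc_subset_Ioi_self
  have hc0lb : (Real.sqrt (2 * Real.pi))⁻¹ * Real.exp (-(3:ℝ)/2) * Real.exp (-(u^2)/2) ≤ c0 := by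
    rw [hc0, mul_assoc, ← Real.exp_add]
    refine mul_le_mul_of_nonneg_left ?_ (by positivity)
    refine Real.exp_le_exp.mpr ?_
    have h1 : u⁻¹ * u = 1 := inv_mul_cancel₀ hu0.ne'
    nlinarith [sq_nonneg u⁻¹]
  have hnum : Real.sqrt (2 * Real.pi) * Real.exp ((3:ℝ)/2) ≤ 23 := by
    have h1 : Real.sqrt (2 * Real.pi) ≤ 3 := by
      rw [show (3:ℝ) = Real.sqrt 9 by
        rw [show (9:ℝ) = 3^2 by norm_num, Real.sqrt_sq (by norm_num)]]
      exact Real.sqrt_le_sqrt (by nlinarith [Real.pi_le_four])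
    have h2 : Real.exp ((3:ℝ)/2) ≤ Real.exp 2 := Real.exp_le_exp.mpr (by norm_num)
    have h3 : Real.exp (2:ℝ) = Real.exp 1 * Real.exp 1 := by
      rw [← Real.exp_add]; norm_num
    have h4 := Real.exp_one_lt_d9
    have h5 : (0:ℝ) ≤ Real.sqrt (2 * Real.pi) := Real.sqrt_nonneg _
    nlinarith [Real.exp_pos (1:ℝ)]
  -- combine
  have hsq : (0:ℝ) < Real.sqrt (2 * Real.pi) := Real.sqrt_pos.mpr (by positivity)
  have hD : (1:ℝ)/23 ≤ (Real.sqrt (2 * Real.pi))⁻¹ * Real.exp (-(3:ℝ)/2) := by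
    have hE : Real.exp (-(3:ℝ)/2) = (Real.exp ((3:ℝ)/2))⁻¹ := by
      rw [← Real.exp_neg]; norm_num
    have ha : (0:ℝ) < Real.sqrt (2 * Real.pi) * Real.exp ((3:ℝ)/2) := by positivity
    rw [div_le_iff₀ (by norm_num), hE, ← mul_inv]
    have h6 := mul_inv_cancel₀ ha.ne'
    nlinarith [inv_pos.mpr ha]
  have hfin : (1/23) * (u⁻¹ * Real.exp (-(u^2)/2)) ≤ ((gaussianReal 0 1) (Set.Ioi u)).toReal := by
    rw [heq]
    calc (1/23) * (u⁻¹ * Real.exp (-(u^2)/2))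
        ≤ ((Real.sqrt (2 * Real.pi))⁻¹ * Real.exp (-(3:ℝ)/2)) * (u⁻¹ * Real.exp (-(u^2)/2)) := by
          refine mul_le_mul_of_nonneg_right hD (by positivity)
      _ = u⁻¹ * ((Real.sqrt (2 * Real.pi))⁻¹ * Real.exp (-(3:ℝ)/2) * Real.exp (-(u^2)/2)) := by ring
      _ ≤ u⁻¹ * c0 := by
          refine mul_le_mul_of_nonneg_left hc0lb (by positivity)
      _ ≤ _ := le_trans step2 step1
  linarith


lemma h7aux {S θ : ℝ} (h1 : S/4 ≤ 1 - θ) (h2 : θ < 1) (h3 : 0 < S) :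
    (1/2 + S/16) * (1 + θ) ≤ 1 := by nlinarith

lemma sqrt_exp_aux {A sa E : ℝ} (h1 : sa ^ (2:ℕ) = A) (h2 : 0 ≤ sa)
    (h3 : 1 + A/32 ≤ E) (h4 : 0 < E) : sa ≤ 4 * E := by
  nlinarith [sq_nonneg (E - 1), sq_nonneg (4 * E - sa), sq_nonneg (4 * E + sa)]

set_option maxHeartbeats 1000000 in
lemma term_bound (ρ : ℝ × ℝ → ℝ) (α₁ α₂ a u ε δ : ℝ)
    (hα1 : 0 < α₁) (hα2 : 0 < α₂) (ha : 0 < a) (hu : 1 ≤ u)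
    (hδ0 : 0 ≤ δ) (hδ : δ ≤ 1/2)
    (hreg : ∀ s t : ℝ, 0 < max |s| |t| → max |s| |t| < ε →
      0 < |s| ^ α₁ + |t| ^ α₂ ∧ |s| ^ α₁ + |t| ^ α₂ ≤ 1/6 ∧
      (|s| ^ α₁ + |t| ^ α₂) / 2 ≤ 1 - ρ (s, t) ∧
      1 - ρ (s, t) ≤ 3 * (|s| ^ α₁ + |t| ^ α₂) / 2)
    (jk : ℤ × ℤ) :
    0 ≤ (if 0 < max |(jk.1 : ℝ) * (a * u ^ (-2 / α₁))|
                |(jk.2 : ℝ) * (a * u ^ (-2 / α₂))| ∧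
          max |(jk.1 : ℝ) * (a * u ^ (-2 / α₁))|
              |(jk.2 : ℝ) * (a * u ^ (-2 / α₂))| < ε
      then
        (1 - ρ ((jk.1 : ℝ) * (a * u ^ (-2 / α₁)),
                (jk.2 : ℝ) * (a * u ^ (-2 / α₂)))) * δ *
        (1 - (ρ ((jk.1 : ℝ) * (a * u ^ (-2 / α₁)),
                 (jk.2 : ℝ) * (a * u ^ (-2 / α₂))) +
              (1 - ρ ((jk.1 : ℝ) * (a * u ^ (-2 / α₁)),
                      (jk.2 : ℝ) * (a * u ^ (-2 / α₂)))) * δ) ^ 2) ^ (-(1:ℝ) / 2) *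
        Real.exp (-(u ^ 2) /
          (1 + ρ ((jk.1 : ℝ) * (a * u ^ (-2 / α₁)),
                  (jk.2 : ℝ) * (a * u ^ (-2 / α₂))) +
            (1 - ρ ((jk.1 : ℝ) * (a * u ^ (-2 / α₁)),
                    (jk.2 : ℝ) * (a * u ^ (-2 / α₂)))) * δ))
      else 0) ∧
    (if 0 < max |(jk.1 : ℝ) * (a * u ^ (-2 / α₁))|
                |(jk.2 : ℝ) * (a * u ^ (-2 / α₂))| ∧
          max |(jk.1 : ℝ) * (a * u ^ (-2 / α₁))|
              |(jk.2 : ℝ) * (a * u ^ (-2 / α₂))| < ε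
      then
        (1 - ρ ((jk.1 : ℝ) * (a * u ^ (-2 / α₁)),
                (jk.2 : ℝ) * (a * u ^ (-2 / α₂)))) * δ *
        (1 - (ρ ((jk.1 : ℝ) * (a * u ^ (-2 / α₁)),
                 (jk.2 : ℝ) * (a * u ^ (-2 / α₂))) +
              (1 - ρ ((jk.1 : ℝ) * (a * u ^ (-2 / α₁)),
                      (jk.2 : ℝ) * (a * u ^ (-2 / α₂)))) * δ) ^ 2) ^ (-(1:ℝ) / 2) *
        Real.exp (-(u ^ 2) /
          (1 + ρ ((jk.1 : ℝ) * (a * u ^ (-2 / α₁)),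
                  (jk.2 : ℝ) * (a * u ^ (-2 / α₂))) +
            (1 - ρ ((jk.1 : ℝ) * (a * u ^ (-2 / α₁)),
                    (jk.2 : ℝ) * (a * u ^ (-2 / α₂)))) * δ))
      else 0) ≤
      12 * δ * u⁻¹ * Real.exp (-(u ^ 2) / 2) *
        Real.exp (-((a ^ α₁ * |(jk.1 : ℝ)| ^ α₁ + a ^ α₂ * |(jk.2 : ℝ)| ^ α₂) / 32)) := by
  have hu0 : (0:ℝ) < u := lt_of_lt_of_le one_pos hu
  by_cases h : 0 < max |(jk.1 : ℝ) * (a * u ^ (-2 / α₁))|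
                |(jk.2 : ℝ) * (a * u ^ (-2 / α₂))| ∧
          max |(jk.1 : ℝ) * (a * u ^ (-2 / α₁))|
              |(jk.2 : ℝ) * (a * u ^ (-2 / α₂))| < ε
  case neg =>
    rw [if_neg h]
    exact ⟨le_rfl, by positivity⟩
  case pos =>
    rw [if_pos h]
    obtain ⟨hpos, hlt⟩ := h
    set s : ℝ := (jk.1 : ℝ) * (a * u ^ (-2 / α₁)) with hs_def
    set t : ℝ := (jk.2 : ℝ) * (a * u ^ (-2 / α₂)) with ht_def
    obtain ⟨hS0, hS6, hρlo, hρhi⟩ := hreg s t hpos hlt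
    set S : ℝ := |s| ^ α₁ + |t| ^ α₂ with hS_def
    set ρ₀ : ℝ := ρ (s, t) with hρ_def
    set θ : ℝ := ρ₀ + (1 - ρ₀) * δ with hθ_def
    set A : ℝ := a ^ α₁ * |(jk.1 : ℝ)| ^ α₁ + a ^ α₂ * |(jk.2 : ℝ)| ^ α₂ with hA_def
    rw [show 1 + ρ₀ + (1 - ρ₀) * δ = 1 + θ by rw [hθ_def]; ring]
    have hA0 : 0 ≤ A := by positivity
    have hθeq : 1 - θ = (1 - ρ₀) * (1 - δ) := by rw [hθ_def]; ring
    have hθge' : ρ₀ ≤ θ := by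
      have := mul_nonneg (show (0:ℝ) ≤ 1 - ρ₀ by linarith) hδ0
      rw [hθ_def]; linarith
    -- S = A / u²
    have hq1 : (0:ℝ) < a * u ^ (-2 / α₁) := by positivity
    have hq2 : (0:ℝ) < a * u ^ (-2 / α₂) := by positivity
    have hrp : ∀ α : ℝ, 0 < α → (u ^ (-2 / α)) ^ α = (u ^ 2)⁻¹ := by
      intro α hα
      rw [← Real.rpow_natCast u 2, ← Real.rpow_mul hu0.le, ← Real.rpow_neg hu0.le]
      congr 1
      push_cast
      field_simp
    have hsα : |s| ^ α₁ = a ^ α₁ * |(jk.1 : ℝ)| ^ α₁ * (u ^ 2)⁻¹ := by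
      rw [hs_def, abs_mul, abs_of_pos hq1,
        Real.mul_rpow (abs_nonneg _) hq1.le,
        Real.mul_rpow ha.le (Real.rpow_nonneg hu0.le _), hrp α₁ hα1]
      ring
    have htα : |t| ^ α₂ = a ^ α₂ * |(jk.2 : ℝ)| ^ α₂ * (u ^ 2)⁻¹ := by
      rw [ht_def, abs_mul, abs_of_pos hq2,
        Real.mul_rpow (abs_nonneg _) hq2.le,
        Real.mul_rpow ha.le (Real.rpow_nonneg hu0.le _), hrp α₂ hα2]
      ring
    have hSA : S = A * (u ^ 2)⁻¹ := by rw [hS_def, hsα, htα, hA_def]; ring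
    have hAS : A = S * u ^ 2 := by rw [hSA]; field_simp
    clear_value s t S ρ₀ θ A
    clear hsα htα hrp hθ_def hA_def hS_def hρ_def hs_def ht_def hpos hlt
    have hA0' : 0 < A := by rw [hAS]; positivity
    -- ρ₀ bounds
    have hρ34 : 3/4 ≤ ρ₀ := by linarith
    have h1ρ0 : 0 < 1 - ρ₀ := by linarith
    -- θ facts
    have hθlo : S / 4 ≤ 1 - θ := by
      rw [hθeq]
      have h5 := mul_le_mul hρlo (show (1:ℝ)/2 ≤ 1 - δ by linarith)
        (by norm_num) h1ρ0.le
      calc S/4 = S/2 * (1/2) := by ring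
        _ ≤ _ := h5
    have hθle : θ < 1 := by
      have := mul_pos h1ρ0 (show (0:ℝ) < 1 - δ by linarith)
      rw [← hθeq] at this
      linarith
    have hθge : 3/4 ≤ θ := le_trans hρ34 hθge'
    have hθ2 : S / 4 ≤ 1 - θ ^ 2 := by
      have h6 := mul_le_mul hθlo (show (1:ℝ) ≤ 1 + θ by linarith)
        (by norm_num) (by linarith : (0:ℝ) ≤ 1 - θ)
      have h7 : (1 - θ) * (1 + θ) = 1 - θ ^ 2 := by ring
      calc S/4 = S/4 * 1 := by ring
        _ ≤ (1 - θ) * (1 + θ) := h6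
        _ = 1 - θ ^ 2 := h7
    have hθ2pos : 0 < 1 - θ ^ 2 := lt_of_lt_of_le (by positivity) hθ2
    -- factor bounds
    have hhalf : (-(1:ℝ) / 2) = -((1:ℝ)/2) := by norm_num
    have f3 : (1 - θ ^ 2) ^ (-(1:ℝ) / 2) ≤ 2 * S ^ (-(1:ℝ) / 2) := by
      rw [hhalf, Real.rpow_neg hθ2pos.le, Real.rpow_neg hS0.le]
      have h41 : (S/4) ^ ((1:ℝ)/2) ≤ (1 - θ ^ 2) ^ ((1:ℝ)/2) :=
        Real.rpow_le_rpow (by positivity) hθ2 (by norm_num)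
      have h42 : (0:ℝ) < (S/4) ^ ((1:ℝ)/2) := Real.rpow_pos_of_pos (by positivity) _
      have h43 : ((1 - θ ^ 2) ^ ((1:ℝ)/2))⁻¹ ≤ ((S/4) ^ ((1:ℝ)/2))⁻¹ :=
        inv_anti₀ h42 h41
      refine h43.trans (le_of_eq ?_)
      rw [Real.div_rpow hS0.le (by norm_num : (0:ℝ) ≤ 4)]
      rw [show (4:ℝ) ^ ((1:ℝ)/2) = 2 by
        rw [show (4:ℝ) = 2 ^ (2:ℕ) by norm_num, ← Real.rpow_natCast 2 2,
          ← Real.rpow_mul (by norm_num : (0:ℝ) ≤ 2)]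
        norm_num]
      rw [inv_div, div_eq_mul_inv]
    have f4 : Real.exp (-(u ^ 2) / (1 + θ)) ≤
        Real.exp (-(u ^ 2) / 2) * Real.exp (-(A / 16)) := by
      rw [← Real.exp_add]
      refine Real.exp_le_exp.mpr ?_
      have hθp : (0:ℝ) < 1 + θ := by linarith
      have h7 : 1/2 + S/16 ≤ 1/(1 + θ) := by
        rw [le_div_iff₀ hθp]
        exact h7aux hθlo hθle hS0
      have h8 : u ^ 2 * (1/2 + S/16) ≤ u ^ 2 * (1/(1 + θ)) :=
        mul_le_mul_of_nonneg_left h7 (sq_nonneg u)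
      have h9 : -(u ^ 2) / (1 + θ) = -(u ^ 2 * (1/(1 + θ))) := by ring
      have h10 : u ^ 2 * S = A := by rw [hAS]; ring
      rw [h9]
      linarith [h8, h10]
    -- nonnegativity of the term
    have hterm0 : 0 ≤ (1 - ρ₀) * δ * (1 - θ ^ 2) ^ (-(1:ℝ) / 2) *
        Real.exp (-(u ^ 2) / (1 + θ)) := by
      have := Real.rpow_nonneg hθ2pos.le (-(1:ℝ)/2)
      have := Real.exp_nonneg (-(u ^ 2) / (1 + θ))
      positivity
    refine ⟨hterm0, ?_⟩
    -- main chain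
    have hSS : S * S ^ (-(1:ℝ) / 2) = S ^ ((1:ℝ)/2) := by
      nth_rewrite 1 [show S = S ^ (1:ℝ) by rw [Real.rpow_one]]
      rw [← Real.rpow_add hS0]
      norm_num
    have hS12 : S ^ ((1:ℝ)/2) = A ^ ((1:ℝ)/2) * u⁻¹ := by
      rw [hSA, Real.mul_rpow hA0 (by positivity),
        Real.inv_rpow (sq_nonneg u), ← Real.rpow_natCast u 2,
        ← Real.rpow_mul hu0.le]
      norm_num
    have hA4 : A ^ ((1:ℝ)/2) * Real.exp (-(A / 16)) ≤ 4 * Real.exp (-(A / 32)) := by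
      have e2 : Real.exp (-(A / 16)) = Real.exp (-(A / 32)) * Real.exp (-(A / 32)) := by
        rw [← Real.exp_add]; ring_nf
      set sa : ℝ := A ^ ((1:ℝ)/2) with hsa_def
      have hsann : 0 ≤ sa := Real.rpow_nonneg hA0 _
      have hsa2 : sa ^ (2:ℕ) = A := by
        rw [hsa_def, ← Real.rpow_natCast (A ^ ((1:ℝ)/2)) 2, ← Real.rpow_mul hA0]
        norm_num
      have hE : 1 + A/32 ≤ Real.exp (A/32) := by
        have := Real.add_one_le_exp (A/32)
        linarith
      have hE0 : (0:ℝ) < Real.exp (A/32) := Real.exp_pos _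
      have key : sa ≤ 4 * Real.exp (A/32) := sqrt_exp_aux hsa2 hsann hE hE0
      have hcc : Real.exp (A/32) * Real.exp (-(A/32)) = 1 := by
        rw [← Real.exp_add]; norm_num
      calc sa * Real.exp (-(A / 16))
          = sa * Real.exp (-(A/32)) * Real.exp (-(A/32)) := by rw [e2]; ring
        _ ≤ 4 * Real.exp (A/32) * Real.exp (-(A/32)) * Real.exp (-(A/32)) := by
            have hx : 0 ≤ Real.exp (-(A/32)) := (Real.exp_pos _).le
            have h1 : sa * Real.exp (-(A/32)) ≤
                4 * Real.exp (A/32) * Real.exp (-(A/32)) :=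
              mul_le_mul_of_nonneg_right key hx
            exact mul_le_mul_of_nonneg_right h1 hx
        _ = 4 * Real.exp (-(A/32)) := by
            rw [show 4 * Real.exp (A/32) * Real.exp (-(A/32)) * Real.exp (-(A/32))
              = 4 * (Real.exp (A/32) * Real.exp (-(A/32))) * Real.exp (-(A/32)) by ring,
              hcc]
            ring
    calc (1 - ρ₀) * δ * (1 - θ ^ 2) ^ (-(1:ℝ) / 2) * Real.exp (-(u ^ 2) / (1 + θ))
        ≤ (3 * S / 2) * δ * (2 * S ^ (-(1:ℝ) / 2)) *
            (Real.exp (-(u ^ 2) / 2) * Real.exp (-(A / 16))) := by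
          have hx1 : 0 ≤ (1 - θ ^ 2) ^ (-(1:ℝ) / 2) := Real.rpow_nonneg hθ2pos.le _
          have hx2 : 0 ≤ 2 * S ^ (-(1:ℝ) / 2) := by positivity
          have hx3 : 0 ≤ Real.exp (-(u ^ 2) / (1 + θ)) := (Real.exp_pos _).le
          have hstep1 : (1 - ρ₀) * δ ≤ (3 * S / 2) * δ :=
            mul_le_mul_of_nonneg_right hρhi hδ0
          have hstep2 : (1 - ρ₀) * δ * (1 - θ ^ 2) ^ (-(1:ℝ) / 2)
              ≤ (3 * S / 2) * δ * (2 * S ^ (-(1:ℝ) / 2)) :=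
            mul_le_mul hstep1 f3 hx1 (by positivity)
          exact mul_le_mul hstep2 f4 hx3 (by positivity)
      _ = 3 * δ * Real.exp (-(u ^ 2) / 2) * (S * S ^ (-(1:ℝ) / 2)) *
            Real.exp (-(A / 16)) := by ring
      _ = 3 * δ * Real.exp (-(u ^ 2) / 2) * u⁻¹ *
            (A ^ ((1:ℝ)/2) * Real.exp (-(A / 16))) := by
          rw [hSS, hS12]; ring
      _ ≤ 3 * δ * Real.exp (-(u ^ 2) / 2) * u⁻¹ * (4 * Real.exp (-(A / 32))) := by
          refine mul_le_mul_of_nonneg_left hA4 (by positivity)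
      _ = 12 * δ * u⁻¹ * Real.exp (-(u ^ 2) / 2) * Real.exp (-(A / 32)) := by ring

end AuxLemmas

/-- Lemma 3: with `q₁ = a·u^{-2/α₁}`, `q₂ = a·u^{-2/α₂}` and `T(u) → ∞`, there
exists `ε > 0` such that the normalized sum over grid points with
`0 < max(|j·q₁|, |k·q₂|) < ε` of
`(1 - r(j·q₁,k·q₂))·(r/log T)·(1 - (r(j·q₁,k·q₂) + (1 - r(j·q₁,k·q₂))·r/log T)²)^{-1/2}
  ·exp(-u²/(1 + r(j·q₁,k·q₂) + (1 - r(j·q₁,k·q₂))·r/log T))` tends to `0`. -/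


theorem statement11 {Ω : Type} [MeasureSpace Ω] [IsProbabilityMeasure (ℙ : Measure Ω)]
    (X : ℝ × ℝ → Ω → ℝ) (ρ : ℝ × ℝ → ℝ) (α₁ α₂ r : ℝ) (hr : 0 ≤ r)
    (hX : IsHomogGaussianField X ρ) (hA1 : CondA1 ρ α₁ α₂) (hA2 : CondA2 ρ)
    (m : ℝ → ℝ) (hmpos : ∀ u, 0 < m u)
    (c : ℝ) (hc : 0 < c)
    (hmΨ : Tendsto (fun u => m u * u ^ (2 / α₁ + 2 / α₂) * stdGaussSurvival u)
      atTop (𝓝 c))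
    (a : ℝ) (ha : 0 < a)
    (T : ℝ → ℝ) (hT : Tendsto T atTop atTop) :
    ∃ ε > (0:ℝ),
      Tendsto (fun u =>
        (m u / ((a * u ^ (-2 / α₁)) * (a * u ^ (-2 / α₂)))) *
        ∑' jk : ℤ × ℤ,
          (if 0 < max |(jk.1 : ℝ) * (a * u ^ (-2 / α₁))|
                    |(jk.2 : ℝ) * (a * u ^ (-2 / α₂))| ∧
              max |(jk.1 : ℝ) * (a * u ^ (-2 / α₁))|
                  |(jk.2 : ℝ) * (a * u ^ (-2 / α₂))| < ε
          then
            (1 - ρ ((jk.1 : ℝ) * (a * u ^ (-2 / α₁)),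
                    (jk.2 : ℝ) * (a * u ^ (-2 / α₂)))) * (r / Real.log (T u)) *
            (1 - (ρ ((jk.1 : ℝ) * (a * u ^ (-2 / α₁)),
                     (jk.2 : ℝ) * (a * u ^ (-2 / α₂))) +
                  (1 - ρ ((jk.1 : ℝ) * (a * u ^ (-2 / α₁)),
                          (jk.2 : ℝ) * (a * u ^ (-2 / α₂)))) *
                    (r / Real.log (T u))) ^ 2) ^ (-(1:ℝ) / 2) *
            Real.exp (-(u ^ 2) /
              (1 + ρ ((jk.1 : ℝ) * (a * u ^ (-2 / α₁)),
                      (jk.2 : ℝ) * (a * u ^ (-2 / α₂))) +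
                (1 - ρ ((jk.1 : ℝ) * (a * u ^ (-2 / α₁)),
                        (jk.2 : ℝ) * (a * u ^ (-2 / α₂)))) * (r / Real.log (T u))))
          else 0))
        atTop (𝓝 0) := by
  obtain ⟨⟨hα1pos, _⟩, ⟨hα2pos, _⟩, hA1t⟩ := hA1
  obtain ⟨ε₁, hε₁pos, hε₁⟩ := Metric.tendsto_nhdsWithin_nhds.mp hA1t (1/2) (by norm_num)
  set ε₂ : ℝ := min ((1/12 : ℝ) ^ (α₁⁻¹)) ((1/12 : ℝ) ^ (α₂⁻¹)) with hε₂def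
  have hε₂pos : 0 < ε₂ := lt_min (Real.rpow_pos_of_pos (by norm_num) _)
    (Real.rpow_pos_of_pos (by norm_num) _)
  refine ⟨min ε₁ ε₂, lt_min hε₁pos hε₂pos, ?_⟩
  set ε : ℝ := min ε₁ ε₂ with hεdef
  have hreg : ∀ s t : ℝ, 0 < max |s| |t| → max |s| |t| < ε →
      0 < |s| ^ α₁ + |t| ^ α₂ ∧ |s| ^ α₁ + |t| ^ α₂ ≤ 1/6 ∧
      (|s| ^ α₁ + |t| ^ α₂) / 2 ≤ 1 - ρ (s, t) ∧
      1 - ρ (s, t) ≤ 3 * (|s| ^ α₁ + |t| ^ α₂) / 2 := by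
    intro s t h0 hlt
    have hS0 : 0 < |s| ^ α₁ + |t| ^ α₂ := by
      rcases lt_max_iff.mp h0 with h | h
      · exact add_pos_of_pos_of_nonneg (Real.rpow_pos_of_pos h _)
          (Real.rpow_nonneg (abs_nonneg t) _)
      · exact add_pos_of_nonneg_of_pos (Real.rpow_nonneg (abs_nonneg s) _)
          (Real.rpow_pos_of_pos h _)
    have hne : (s, t) ∈ ({0}ᶜ : Set (ℝ × ℝ)) := by
      simp only [Set.mem_compl_iff, Set.mem_singleton_iff, Prod.ext_iff, not_and]
      intro hs ht
      rw [hs] at h0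
      rw [ht] at h0
      simp at h0
    have hdist : dist (s, t) (0 : ℝ × ℝ) < ε₁ := by
      have : dist (s, t) (0 : ℝ × ℝ) = max |s| |t| := by
        rw [Prod.dist_eq]
        simp [Real.dist_eq]
      rw [this]
      exact lt_of_lt_of_le hlt (min_le_left _ _)
    have hquot := hε₁ hne hdist
    rw [dist_zero_right, Real.norm_eq_abs, abs_div,
      abs_of_pos hS0, div_lt_iff₀ hS0] at hquot
    have hnum := abs_lt.mp hquot
    have hsb : |s| ^ α₁ ≤ 1/12 := by
      have hlt2 : |s| ≤ (1/12 : ℝ) ^ (α₁⁻¹) := by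
        have h1 : |s| ≤ max |s| |t| := le_max_left _ _
        have h2 : (ε : ℝ) ≤ ε₂ := min_le_right _ _
        have h3 : ε₂ ≤ (1/12 : ℝ) ^ (α₁⁻¹) := min_le_left _ _
        linarith
      calc |s| ^ α₁ ≤ ((1/12 : ℝ) ^ (α₁⁻¹)) ^ α₁ :=
            Real.rpow_le_rpow (abs_nonneg s) hlt2 hα1pos.le
        _ = 1/12 := by
            rw [← Real.rpow_mul (by norm_num), inv_mul_cancel₀ hα1pos.ne',
              Real.rpow_one]
    have htb : |t| ^ α₂ ≤ 1/12 := by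
      have hlt2 : |t| ≤ (1/12 : ℝ) ^ (α₂⁻¹) := by
        have h1 : |t| ≤ max |s| |t| := le_max_right _ _
        have h2 : (ε : ℝ) ≤ ε₂ := min_le_right _ _
        have h3 : ε₂ ≤ (1/12 : ℝ) ^ (α₂⁻¹) := min_le_right _ _
        linarith
      calc |t| ^ α₂ ≤ ((1/12 : ℝ) ^ (α₂⁻¹)) ^ α₂ :=
            Real.rpow_le_rpow (abs_nonneg t) hlt2 hα2pos.le
        _ = 1/12 := by
            rw [← Real.rpow_mul (by norm_num), inv_mul_cancel₀ hα2pos.ne',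
              Real.rpow_one]
    exact ⟨hS0, by linarith, by linarith [hnum.1, hnum.2], by linarith [hnum.1, hnum.2]⟩
  -- constants
  have hb1 : (0:ℝ) < a ^ α₁ := Real.rpow_pos_of_pos ha _
  have hb2 : (0:ℝ) < a ^ α₂ := Real.rpow_pos_of_pos ha _
  have hCsum : Summable (fun jk : ℤ × ℤ =>
      Real.exp (-((a ^ α₁ * |(jk.1 : ℝ)| ^ α₁ + a ^ α₂ * |(jk.2 : ℝ)| ^ α₂) / 32))) :=
    summable_exp_prod hb1 hb2 hα1pos hα2pos
  set C : ℝ := ∑' jk : ℤ × ℤ,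
      Real.exp (-((a ^ α₁ * |(jk.1 : ℝ)| ^ α₁ + a ^ α₂ * |(jk.2 : ℝ)| ^ α₂) / 32))
    with hCdef
  have hC0 : 0 ≤ C := tsum_nonneg fun _ => (Real.exp_pos _).le
  set D : ℝ := 12 * C * 23 * (c + 1) / a ^ 2 with hDdef
  have hTlog : Tendsto (fun u => Real.log (T u)) atTop atTop :=
    Real.tendsto_log_atTop.comp hT
  have hδlim : Tendsto (fun u => r / Real.log (T u)) atTop (𝓝 0) := by
    have h2 := (tendsto_inv_atTop_zero.comp hTlog).const_mul r
    simpa [div_eq_mul_inv, Function.comp] using h2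
  have hDlim : Tendsto (fun u => D * (r / Real.log (T u))) atTop (𝓝 0) := by
    simpa using hδlim.const_mul D
  have ev1 : ∀ᶠ u in atTop, (1:ℝ) ≤ u := eventually_ge_atTop 1
  have ev2 : ∀ᶠ u in atTop, max 1 (2*r) ≤ Real.log (T u) :=
    hTlog.eventually_ge_atTop _
  have ev3 : ∀ᶠ u in atTop,
      m u * u ^ (2 / α₁ + 2 / α₂) * stdGaussSurvival u ≤ c + 1 :=
    hmΨ.eventually (eventually_le_nhds (lt_add_one c))
  have evmain : ∀ᶠ u in atTop,
      0 ≤ (m u / ((a * u ^ (-2 / α₁)) * (a * u ^ (-2 / α₂)))) *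
        ∑' jk : ℤ × ℤ,
          (if 0 < max |(jk.1 : ℝ) * (a * u ^ (-2 / α₁))|
                    |(jk.2 : ℝ) * (a * u ^ (-2 / α₂))| ∧
              max |(jk.1 : ℝ) * (a * u ^ (-2 / α₁))|
                  |(jk.2 : ℝ) * (a * u ^ (-2 / α₂))| < ε
          then
            (1 - ρ ((jk.1 : ℝ) * (a * u ^ (-2 / α₁)),
                    (jk.2 : ℝ) * (a * u ^ (-2 / α₂)))) * (r / Real.log (T u)) *
            (1 - (ρ ((jk.1 : ℝ) * (a * u ^ (-2 / α₁)),
                     (jk.2 : ℝ) * (a * u ^ (-2 / α₂))) +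
                  (1 - ρ ((jk.1 : ℝ) * (a * u ^ (-2 / α₁)),
                          (jk.2 : ℝ) * (a * u ^ (-2 / α₂)))) *
                    (r / Real.log (T u))) ^ 2) ^ (-(1:ℝ) / 2) *
            Real.exp (-(u ^ 2) /
              (1 + ρ ((jk.1 : ℝ) * (a * u ^ (-2 / α₁)),
                      (jk.2 : ℝ) * (a * u ^ (-2 / α₂))) +
                (1 - ρ ((jk.1 : ℝ) * (a * u ^ (-2 / α₁)),
                        (jk.2 : ℝ) * (a * u ^ (-2 / α₂)))) * (r / Real.log (T u))))
          else 0) ∧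
      (m u / ((a * u ^ (-2 / α₁)) * (a * u ^ (-2 / α₂)))) *
        ∑' jk : ℤ × ℤ,
          (if 0 < max |(jk.1 : ℝ) * (a * u ^ (-2 / α₁))|
                    |(jk.2 : ℝ) * (a * u ^ (-2 / α₂))| ∧
              max |(jk.1 : ℝ) * (a * u ^ (-2 / α₁))|
                  |(jk.2 : ℝ) * (a * u ^ (-2 / α₂))| < ε
          then
            (1 - ρ ((jk.1 : ℝ) * (a * u ^ (-2 / α₁)),
                    (jk.2 : ℝ) * (a * u ^ (-2 / α₂)))) * (r / Real.log (T u)) *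
            (1 - (ρ ((jk.1 : ℝ) * (a * u ^ (-2 / α₁)),
                     (jk.2 : ℝ) * (a * u ^ (-2 / α₂))) +
                  (1 - ρ ((jk.1 : ℝ) * (a * u ^ (-2 / α₁)),
                          (jk.2 : ℝ) * (a * u ^ (-2 / α₂)))) *
                    (r / Real.log (T u))) ^ 2) ^ (-(1:ℝ) / 2) *
            Real.exp (-(u ^ 2) /
              (1 + ρ ((jk.1 : ℝ) * (a * u ^ (-2 / α₁)),
                      (jk.2 : ℝ) * (a * u ^ (-2 / α₂))) +
                (1 - ρ ((jk.1 : ℝ) * (a * u ^ (-2 / α₁)),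
                        (jk.2 : ℝ) * (a * u ^ (-2 / α₂)))) * (r / Real.log (T u))))
          else 0) ≤ D * (r / Real.log (T u)) := by
    filter_upwards [ev1, ev2, ev3] with u hu1 hlog hm1
    have hu0 : (0:ℝ) < u := lt_of_lt_of_le one_pos hu1
    have hlog1 : (1:ℝ) ≤ Real.log (T u) := le_trans (le_max_left _ _) hlog
    have hlogpos : (0:ℝ) < Real.log (T u) := lt_of_lt_of_le one_pos hlog1
    have hδ0 : 0 ≤ r / Real.log (T u) := div_nonneg hr hlogpos.le
    have hδh : r / Real.log (T u) ≤ 1/2 := by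
      rw [div_le_iff₀ hlogpos]
      have := le_trans (le_max_right 1 (2*r)) hlog
      linarith
    have key := fun jk => term_bound ρ α₁ α₂ a u ε (r / Real.log (T u))
      hα1pos hα2pos ha hu1 hδ0 hδh hreg jk
    have hq12pos : (0:ℝ) < (a * u ^ (-2 / α₁)) * (a * u ^ (-2 / α₂)) := by positivity
    have hpref0 : 0 ≤ m u / ((a * u ^ (-2 / α₁)) * (a * u ^ (-2 / α₂))) :=
      div_nonneg (hmpos u).le hq12pos.le
    have hgsum : Summable (fun jk : ℤ × ℤ =>
        12 * (r / Real.log (T u)) * u⁻¹ * Real.exp (-(u ^ 2) / 2) *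
          Real.exp (-((a ^ α₁ * |(jk.1 : ℝ)| ^ α₁ + a ^ α₂ * |(jk.2 : ℝ)| ^ α₂) / 32))) :=
      hCsum.mul_left _
    have hfsum := Summable.of_nonneg_of_le (fun jk => (key jk).1)
      (fun jk => (key jk).2) hgsum
    constructor
    · exact mul_nonneg hpref0 (tsum_nonneg fun jk => (key jk).1)
    · have htsum_le := Summable.tsum_le_tsum (fun jk => (key jk).2) hfsum hgsum
      have htsum_eq : (∑' jk : ℤ × ℤ,
          12 * (r / Real.log (T u)) * u⁻¹ * Real.exp (-(u ^ 2) / 2) *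
            Real.exp (-((a ^ α₁ * |(jk.1 : ℝ)| ^ α₁ + a ^ α₂ * |(jk.2 : ℝ)| ^ α₂) / 32)))
          = 12 * (r / Real.log (T u)) * u⁻¹ * Real.exp (-(u ^ 2) / 2) * C :=
        tsum_mul_left
      have hψ : u⁻¹ * Real.exp (-(u ^ 2) / 2) ≤ 23 * stdGaussSurvival u := by
        unfold stdGaussSurvival
        exact psi_lb' hu1
      have hupP : (0:ℝ) < u ^ (2 / α₁ + 2 / α₂) := Real.rpow_pos_of_pos hu0 _
      have hpref : m u / ((a * u ^ (-2 / α₁)) * (a * u ^ (-2 / α₂)))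
          = m u * u ^ (2 / α₁ + 2 / α₂) / a ^ 2 := by
        have h1 : u ^ (-2 / α₁) * u ^ (-2 / α₂) = u ^ (-(2 / α₁ + 2 / α₂)) := by
          rw [← Real.rpow_add hu0]
          congr 1
          ring
        have h2 : (a * u ^ (-2 / α₁)) * (a * u ^ (-2 / α₂))
            = a ^ 2 * (u ^ (2 / α₁ + 2 / α₂))⁻¹ := by
          rw [show (a * u ^ (-2 / α₁)) * (a * u ^ (-2 / α₂))
            = a ^ 2 * (u ^ (-2 / α₁) * u ^ (-2 / α₂)) by ring, h1,
            Real.rpow_neg hu0.le]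
        rw [h2]
        field_simp
      have hM0 : 0 ≤ m u * u ^ (2 / α₁ + 2 / α₂) :=
        mul_nonneg (hmpos u).le hupP.le
      have hME : (m u * u ^ (2 / α₁ + 2 / α₂)) * (u⁻¹ * Real.exp (-(u ^ 2) / 2))
          ≤ 23 * (c + 1) := by
        calc (m u * u ^ (2 / α₁ + 2 / α₂)) * (u⁻¹ * Real.exp (-(u ^ 2) / 2))
            ≤ (m u * u ^ (2 / α₁ + 2 / α₂)) * (23 * stdGaussSurvival u) :=
              mul_le_mul_of_nonneg_left hψ hM0
          _ = 23 * (m u * u ^ (2 / α₁ + 2 / α₂) * stdGaussSurvival u) := by ring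
          _ ≤ 23 * (c + 1) := by linarith
      calc (m u / ((a * u ^ (-2 / α₁)) * (a * u ^ (-2 / α₂)))) * ∑' jk : ℤ × ℤ, _
          ≤ (m u / ((a * u ^ (-2 / α₁)) * (a * u ^ (-2 / α₂)))) *
            (12 * (r / Real.log (T u)) * u⁻¹ * Real.exp (-(u ^ 2) / 2) * C) := by
            rw [← htsum_eq]
            exact mul_le_mul_of_nonneg_left htsum_le hpref0
        _ = (12 * C * (r / Real.log (T u)) / a ^ 2) *
            ((m u * u ^ (2 / α₁ + 2 / α₂)) * (u⁻¹ * Real.exp (-(u ^ 2) / 2))) := by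
            rw [hpref]
            ring
        _ ≤ (12 * C * (r / Real.log (T u)) / a ^ 2) * (23 * (c + 1)) := by
            refine mul_le_mul_of_nonneg_left hME (by positivity)
        _ = D * (r / Real.log (T u)) := by
            rw [hDdef]
            ring
  exact squeeze_zero' (evmain.mono fun u h => h.1) (evmain.mono fun u h => h.2) hDlim
end
end

section
/- Let α1, α2 ∈ (0,2], τ > 0 and c > 0 be constants, and let T1(u), T2(u) be positive functions with T1(u) → ∞, T2(u) → ∞ and c·T1(u)·T2(u)·u^{2/α1 + 2/α2}·Ψ(u) → τ² as u → ∞. Then: (a) u² / (2·log(T1(u)·T2(u))) → 1; (b) log u = (1/2)·log 2 + (1/2)·log log(T1(u)·T2(u)) + o(1); and (c) u² = 2·log(T1(u)·T2(u)) + (2/α1 + 2/α2 − 1)·log log(T1(u)·T2(u)) − 4·log τ + 2·log( c·2^{1/α1 + 1/α2}/(2√π) ) + o(1), as u → ∞. -/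
open MeasureTheory ProbabilityTheory Filter Set Topology
open Real

noncomputable section

lemma myExpTendsto : Tendsto (fun x : ℝ => rexp (-(x^2/2))) atTop (𝓝 0) := by
  apply Real.tendsto_exp_atBot.comp
  apply tendsto_neg_atTop_atBot.comp
  exact (tendsto_pow_atTop two_ne_zero).atTop_div_const two_pos

lemma myDeriv1 (x : ℝ) : HasDerivAt (fun y : ℝ => -rexp (-(y^2/2))) (x * rexp (-(x^2/2))) x := by
  have h0 : HasDerivAt (fun y : ℝ => -(y^2/2)) (-x) x := by
    have := ((hasDerivAt_pow 2 x).div_const 2).fun_neg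
    refine this.congr_deriv ?_
    push_cast; ring
  have := h0.exp.fun_neg
  refine this.congr_deriv ?_
  ring

lemma myNeg0 : Tendsto (fun y : ℝ => -rexp (-(y^2/2))) atTop (𝓝 0) := by
  simpa using myExpTendsto.neg

lemma myIntA (u : ℝ) (hu : 1 ≤ u) :
    ∫ x in Ioi u, x * rexp (-(x^2/2)) = rexp (-(u^2/2)) := by
  have h := integral_Ioi_of_hasDerivAt_of_nonneg' (fun x _ => myDeriv1 x)
    (fun x hx => by
      have : (0:ℝ) < x := lt_of_lt_of_le one_pos (le_of_lt (lt_of_le_of_lt hu hx))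
      positivity) myNeg0
  simpa using h

lemma myIntAInt (u : ℝ) (hu : 1 ≤ u) :
    IntegrableOn (fun x => x * rexp (-(x^2/2))) (Ioi u) :=
  integrableOn_Ioi_deriv_of_nonneg' (fun x _ => myDeriv1 x)
    (fun x hx => by
      have : (0:ℝ) < x := lt_of_lt_of_le one_pos (le_of_lt (lt_of_le_of_lt hu hx))
      positivity) myNeg0

lemma myExpInt (u : ℝ) : IntegrableOn (fun x : ℝ => rexp (-(x^2/2))) (Ioi u) := by
  have h := integrable_exp_neg_mul_sq (by norm_num : (0:ℝ) < 1/2)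
  have : (fun x : ℝ => rexp (-(x^2/2))) = fun x : ℝ => rexp (-(1/2) * x^2) := by
    funext x; congr 1; ring
  rw [this]
  exact h.integrableOn

-- the antiderivative for the lower bound
lemma myDeriv2 (x : ℝ) (hx : (0:ℝ) < 1 + x^2) :
    HasDerivAt (fun y : ℝ => -(y/(1+y^2) * rexp (-(y^2/2))))
      (rexp (-(x^2/2)) * ((x^4+2*x^2-1)/(1+x^2)^2)) x := by
  have hne : (1 + x^2) ≠ 0 := ne_of_gt hx
  have h0 : HasDerivAt (fun y : ℝ => -(y^2/2)) (-x) x := by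
    have := ((hasDerivAt_pow 2 x).div_const 2).fun_neg
    refine this.congr_deriv ?_
    push_cast; ring
  have hp : HasDerivAt (fun y : ℝ => y/(1+y^2))
      ((1*(1+x^2) - x*(2*x))/(1+x^2)^2) x := by
    have := (hasDerivAt_id x).fun_div ((hasDerivAt_const x (1:ℝ)).fun_add (hasDerivAt_pow 2 x)) hne
    refine this.congr_deriv ?_
    simp only [id_eq]
    push_cast; ring
  have := (hp.mul h0.exp).fun_neg
  refine this.congr_deriv ?_
  field_simp
  ring

lemma myTendsto2 : Tendsto (fun y : ℝ => -(y/(1+y^2) * rexp (-(y^2/2)))) atTop (𝓝 0) := by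
  have h : Tendsto (fun y : ℝ => y/(1+y^2) * rexp (-(y^2/2))) atTop (𝓝 0) := by
    apply squeeze_zero' (g := fun y : ℝ => rexp (-(y^2/2)))
    · filter_upwards [eventually_ge_atTop (0:ℝ)] with y hy
      have : (0:ℝ) < 1 + y^2 := by positivity
      positivity
    · filter_upwards [eventually_ge_atTop (0:ℝ)] with y hy
      have h2 : (0:ℝ) < 1 + y^2 := by positivity
      have : y/(1+y^2) ≤ 1 := by
        rw [div_le_one h2]; nlinarith
      calc y/(1+y^2) * rexp (-(y^2/2)) ≤ 1 * rexp (-(y^2/2)) := by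
            apply mul_le_mul_of_nonneg_right this (le_of_lt (exp_pos _))
        _ = rexp (-(y^2/2)) := one_mul _
    · exact myExpTendsto
  simpa using h.neg

lemma myIntB (u : ℝ) (hu : 1 ≤ u) :
    ∫ x in Ioi u, rexp (-(x^2/2)) * ((x^4+2*x^2-1)/(1+x^2)^2)
      = u/(1+u^2) * rexp (-(u^2/2)) := by
  have h := integral_Ioi_of_hasDerivAt_of_nonneg'
    (g := fun y : ℝ => -(y/(1+y^2) * rexp (-(y^2/2))))
    (fun x _ => myDeriv2 x (by positivity))
    (fun x hx => by
      have h1 : (1:ℝ) ≤ x := le_of_lt (lt_of_le_of_lt hu hx)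
      have h2 : (0:ℝ) ≤ x^4+2*x^2-1 := by nlinarith
      positivity) myTendsto2
  simpa using h

lemma myIntBInt (u : ℝ) (hu : 1 ≤ u) :
    IntegrableOn (fun x : ℝ => rexp (-(x^2/2)) * ((x^4+2*x^2-1)/(1+x^2)^2)) (Ioi u) :=
  integrableOn_Ioi_deriv_of_nonneg'
    (fun x _ => myDeriv2 x (by positivity))
    (fun x hx => by
      have h1 : (1:ℝ) ≤ x := le_of_lt (lt_of_le_of_lt hu hx)
      have h2 : (0:ℝ) ≤ x^4+2*x^2-1 := by nlinarith
      positivity) myTendsto2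
lemma myPsiEq (u : ℝ) :
    stdGaussSurvival u = (Real.sqrt (2*π))⁻¹ * ∫ x in Ioi u, rexp (-(x^2/2)) := by
  rw [stdGaussSurvival, gaussianReal_apply_eq_integral 0 one_ne_zero,
    ENNReal.toReal_ofReal (setIntegral_nonneg measurableSet_Ioi
      (fun x _ => gaussianPDFReal_nonneg 0 1 x))]
  rw [← integral_const_mul]
  congr 1
  funext x
  simp only [gaussianPDFReal, NNReal.coe_one, mul_one, sub_zero]
  congr 1
  ring

lemma myPsiUpper (u : ℝ) (hu : 1 ≤ u) :
    stdGaussSurvival u ≤ (Real.sqrt (2*π))⁻¹ * (u⁻¹ * rexp (-(u^2/2))) := by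
  rw [myPsiEq]
  have hs : (0:ℝ) < (Real.sqrt (2*π))⁻¹ := by positivity
  apply mul_le_mul_of_nonneg_left _ hs.le
  have hmono : ∫ x in Ioi u, rexp (-(x^2/2)) ≤ ∫ x in Ioi u, u⁻¹ * (x * rexp (-(x^2/2))) := by
    apply setIntegral_mono_on (myExpInt u) ((myIntAInt u hu).const_mul u⁻¹) measurableSet_Ioi
    intro x hx
    have hx1 : (1:ℝ) < x := lt_of_le_of_lt hu hx
    have hu0 : (0:ℝ) < u := lt_of_lt_of_le one_pos hu
    have h1 : (1:ℝ) ≤ u⁻¹ * x := by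
      rw [← div_eq_inv_mul, le_div_iff₀ hu0, one_mul]
      exact le_of_lt hx
    calc rexp (-(x^2/2)) = 1 * rexp (-(x^2/2)) := (one_mul _).symm
      _ ≤ (u⁻¹ * x) * rexp (-(x^2/2)) := by
          apply mul_le_mul_of_nonneg_right h1 (exp_pos _).le
      _ = u⁻¹ * (x * rexp (-(x^2/2))) := by ring
  calc ∫ x in Ioi u, rexp (-(x^2/2)) ≤ ∫ x in Ioi u, u⁻¹ * (x * rexp (-(x^2/2))) := hmono
    _ = u⁻¹ * ∫ x in Ioi u, x * rexp (-(x^2/2)) := integral_const_mul _ _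
    _ = u⁻¹ * rexp (-(u^2/2)) := by rw [myIntA u hu]

lemma myPsiLower (u : ℝ) (hu : 1 ≤ u) :
    (Real.sqrt (2*π))⁻¹ * (u/(1+u^2) * rexp (-(u^2/2))) ≤ stdGaussSurvival u := by
  rw [myPsiEq]
  have hs : (0:ℝ) < (Real.sqrt (2*π))⁻¹ := by positivity
  apply mul_le_mul_of_nonneg_left _ hs.le
  rw [← myIntB u hu]
  apply setIntegral_mono_on (myIntBInt u hu) (myExpInt u) measurableSet_Ioi
  intro x hx
  have hx1 : (1:ℝ) < x := lt_of_le_of_lt hu hx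
  have h2 : (0:ℝ) < (1+x^2)^2 := by positivity
  have h3 : (x^4+2*x^2-1)/(1+x^2)^2 ≤ 1 := by
    rw [div_le_one h2]; nlinarith
  have h4 : (0:ℝ) ≤ (x^4+2*x^2-1)/(1+x^2)^2 := by
    apply div_nonneg _ h2.le; nlinarith
  calc rexp (-(x^2/2)) * ((x^4+2*x^2-1)/(1+x^2)^2) ≤ rexp (-(x^2/2)) * 1 :=
        mul_le_mul_of_nonneg_left h3 (exp_pos _).le
    _ = rexp (-(x^2/2)) := mul_one _

lemma myPsiPos (u : ℝ) (hu : 1 ≤ u) : 0 < stdGaussSurvival u := by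
  refine lt_of_lt_of_le ?_ (myPsiLower u hu)
  have hu0 : (0:ℝ) < u := lt_of_lt_of_le one_pos hu
  have : (0:ℝ) < 1 + u^2 := by positivity
  positivity

lemma myRatTendsto : Tendsto (fun u : ℝ => u^2/(1+u^2)) atTop (𝓝 1) := by
  have h : (fun u : ℝ => u^2/(1+u^2)) = fun u : ℝ => 1 - (1+u^2)⁻¹ := by
    funext u
    have : (0:ℝ) < 1 + u^2 := by positivity
    field_simp; ring
  rw [h]
  have h2 : Tendsto (fun u : ℝ => (1+u^2)⁻¹) atTop (𝓝 0) := by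
    apply tendsto_inv_atTop_zero.comp
    exact tendsto_atTop_add_const_left _ 1 (tendsto_pow_atTop two_ne_zero)
  simpa using (tendsto_const_nhds (x := (1:ℝ)) (f := atTop)).sub h2

lemma myH : Tendsto (fun u : ℝ =>
    Real.sqrt (2*π) * u * rexp (u^2/2) * stdGaussSurvival u) atTop (𝓝 1) := by
  apply tendsto_of_tendsto_of_tendsto_of_le_of_le' myRatTendsto tendsto_const_nhds
  · filter_upwards [eventually_ge_atTop (1:ℝ)] with u hu
    have hu0 : (0:ℝ) < u := lt_of_lt_of_le one_pos hu
    have h1 : (0:ℝ) < 1 + u^2 := by positivity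
    have hs : (0:ℝ) < Real.sqrt (2*π) := by positivity
    have key : Real.sqrt (2*π) * u * rexp (u^2/2)
        * ((Real.sqrt (2*π))⁻¹ * (u/(1+u^2) * rexp (-(u^2/2)))) = u^2/(1+u^2) := by
      rw [Real.exp_neg]
      field_simp
    rw [← key]
    exact mul_le_mul_of_nonneg_left (myPsiLower u hu) (by positivity)
  · filter_upwards [eventually_ge_atTop (1:ℝ)] with u hu
    have hu0 : (0:ℝ) < u := lt_of_lt_of_le one_pos hu
    have hs : (0:ℝ) < Real.sqrt (2*π) := by positivity
    have key : Real.sqrt (2*π) * u * rexp (u^2/2)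
        * ((Real.sqrt (2*π))⁻¹ * (u⁻¹ * rexp (-(u^2/2)))) = 1 := by
      rw [Real.exp_neg]
      field_simp
    rw [← key]
    exact mul_le_mul_of_nonneg_left (myPsiUpper u hu) (by positivity)

lemma myKeyG : Tendsto (fun u : ℝ => Real.log (stdGaussSurvival u) + u^2/2 + Real.log u
    + Real.log (Real.sqrt (2*π))) atTop (𝓝 0) := by
  have h := (Real.continuousAt_log one_ne_zero).tendsto.comp myH
  rw [Real.log_one] at h
  apply h.congr'
  filter_upwards [eventually_ge_atTop (1:ℝ)] with u hu
  have hu0 : (0:ℝ) < u := lt_of_lt_of_le one_pos hu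
  have hs : (0:ℝ) < Real.sqrt (2*π) := by positivity
  have hψ : (0:ℝ) < stdGaussSurvival u := myPsiPos u hu
  have he : (0:ℝ) < rexp (u^2/2) := exp_pos _
  show Real.log _ = _
  rw [Real.log_mul (by positivity) (ne_of_gt hψ), Real.log_mul (by positivity) (ne_of_gt he),
    Real.log_mul (ne_of_gt hs) (ne_of_gt hu0), Real.log_exp]
  ring

/-- Asymptotic expansions of `u` in terms of `T₁(u)·T₂(u)` when
`c·T₁(u)·T₂(u)·u^{2/α₁+2/α₂}·Ψ(u) → τ²`. -/
theorem statement12 (α₁ α₂ τ c : ℝ)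
    (hα₁ : α₁ ∈ Set.Ioc (0:ℝ) 2) (hα₂ : α₂ ∈ Set.Ioc (0:ℝ) 2)
    (hτ : 0 < τ) (hc : 0 < c)
    (T₁ T₂ : ℝ → ℝ) (hT₁pos : ∀ u, 0 < T₁ u) (hT₂pos : ∀ u, 0 < T₂ u)
    (hT₁ : Tendsto T₁ atTop atTop) (hT₂ : Tendsto T₂ atTop atTop)
    (hmain : Tendsto (fun u => c * T₁ u * T₂ u * u ^ (2 / α₁ + 2 / α₂)
      * stdGaussSurvival u) atTop (𝓝 (τ ^ 2))) :
    Tendsto (fun u : ℝ => u ^ 2 / (2 * Real.log (T₁ u * T₂ u))) atTop (𝓝 1)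
    ∧ Tendsto (fun u : ℝ => Real.log u - ((1 / 2) * Real.log 2
        + (1 / 2) * Real.log (Real.log (T₁ u * T₂ u)))) atTop (𝓝 0)
    ∧ Tendsto (fun u : ℝ => u ^ 2 - (2 * Real.log (T₁ u * T₂ u)
        + (2 / α₁ + 2 / α₂ - 1) * Real.log (Real.log (T₁ u * T₂ u))
        - 4 * Real.log τ
        + 2 * Real.log (c * 2 ^ (1 / α₁ + 1 / α₂) / (2 * Real.sqrt Real.pi))))
      atTop (𝓝 0) := by
  set a : ℝ := 2 / α₁ + 2 / α₂ with ha'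
  set L : ℝ → ℝ := fun u => Real.log (T₁ u * T₂ u) with hLdef
  have hL : Tendsto L atTop atTop :=
    Real.tendsto_log_atTop.comp (hT₁.atTop_mul_atTop₀ hT₂)
  have hτ2 : (0:ℝ) < τ ^ 2 := by positivity
  have hlogF : Tendsto (fun u => Real.log (c * T₁ u * T₂ u * u ^ a
      * stdGaussSurvival u)) atTop (𝓝 (Real.log (τ ^ 2))) :=
    (Real.continuousAt_log (ne_of_gt hτ2)).tendsto.comp hmain
  set D : ℝ → ℝ := fun u => u ^ 2 / 2 - L u - (a - 1) * Real.log u with hDdef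
  set K : ℝ := Real.log c - Real.log (Real.sqrt (2 * π)) - Real.log (τ ^ 2) with hKdef
  -- step 1 : D tends to K
  have hD : Tendsto D atTop (𝓝 K) := by
    have h1 : Tendsto (fun u : ℝ => Real.log c - Real.log (Real.sqrt (2 * π))
        + (Real.log (stdGaussSurvival u) + u ^ 2 / 2 + Real.log u
          + Real.log (Real.sqrt (2 * π)))
        - Real.log (c * T₁ u * T₂ u * u ^ a * stdGaussSurvival u)) atTop
        (𝓝 (Real.log c - Real.log (Real.sqrt (2 * π)) + 0 - Real.log (τ ^ 2))) :=
      (tendsto_const_nhds.add myKeyG).sub hlogF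
    rw [show Real.log c - Real.log (Real.sqrt (2 * π)) + 0 - Real.log (τ ^ 2) = K by
      rw [hKdef]; ring] at h1
    apply h1.congr'
    filter_upwards [eventually_ge_atTop (1:ℝ)] with u hu
    have hu0 : (0:ℝ) < u := lt_of_lt_of_le one_pos hu
    have hψ : (0:ℝ) < stdGaussSurvival u := myPsiPos u hu
    have h1 : (0:ℝ) < T₁ u := hT₁pos u
    have h2 : (0:ℝ) < T₂ u := hT₂pos u
    have hpow : (0:ℝ) < u ^ a := Real.rpow_pos_of_pos hu0 a
    simp only [hDdef, hLdef]
    rw [Real.log_mul (by positivity) (ne_of_gt hψ),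
      Real.log_mul (by positivity) (ne_of_gt hpow),
      Real.log_mul (by positivity) (ne_of_gt h2),
      Real.log_mul (ne_of_gt hc) (ne_of_gt h1),
      Real.log_rpow hu0, Real.log_mul (ne_of_gt h1) (ne_of_gt h2)]
    ring
  -- step 2 : log u / u² → 0 and D/u² → 0
  have hlogdiv : Tendsto (fun u : ℝ => Real.log u / u ^ 2) atTop (𝓝 0) := by
    apply squeeze_zero' (g := fun u : ℝ => u⁻¹)
    · filter_upwards [eventually_ge_atTop (1:ℝ)] with u hu
      have := Real.log_nonneg hu
      positivity
    · filter_upwards [eventually_ge_atTop (1:ℝ)] with u hu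
      have hu0 : (0:ℝ) < u := lt_of_lt_of_le one_pos hu
      have hlog : Real.log u ≤ u := (Real.log_le_sub_one_of_pos hu0).trans (by linarith)
      calc Real.log u / u ^ 2 ≤ u / u ^ 2 := by gcongr
        _ = u⁻¹ := by rw [pow_two]; field_simp
    · exact tendsto_inv_atTop_zero
  have hDdiv : Tendsto (fun u : ℝ => D u / u ^ 2) atTop (𝓝 0) :=
    hD.div_atTop (tendsto_pow_atTop two_ne_zero)
  -- step 3 : part (a)
  have hinv : Tendsto (fun u : ℝ => 2 * L u / u ^ 2) atTop (𝓝 1) := by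
    have h1 : Tendsto (fun u : ℝ => 1 - 2 * (a - 1) * (Real.log u / u ^ 2)
        - 2 * (D u / u ^ 2)) atTop (𝓝 1) := by
      have := ((tendsto_const_nhds (x := (1:ℝ)) (f := atTop)).sub
        (hlogdiv.const_mul (2 * (a - 1)))).sub (hDdiv.const_mul 2)
      simpa using this
    apply h1.congr'
    filter_upwards [eventually_gt_atTop (0:ℝ)] with u hu
    have hu2 : u ^ 2 ≠ 0 := by positivity
    have hkey : 2 * L u = u ^ 2 - 2 * (a - 1) * Real.log u - 2 * D u := by
      simp only [hDdef]; ring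
    rw [hkey]
    field_simp
  have parta : Tendsto (fun u : ℝ => u ^ 2 / (2 * L u)) atTop (𝓝 1) := by
    have h2 := hinv.inv₀ one_ne_zero
    rw [inv_one] at h2
    apply h2.congr
    intro u
    exact inv_div (2 * L u) (u ^ 2)
  -- part (b)
  have hq := (Real.continuousAt_log one_ne_zero).tendsto.comp parta
  rw [Real.log_one] at hq
  have partb : Tendsto (fun u : ℝ => Real.log u - (1 / 2 * Real.log 2
      + 1 / 2 * Real.log (L u))) atTop (𝓝 0) := by
    have h3 : Tendsto (fun u : ℝ => 1 / 2 * Real.log (u ^ 2 / (2 * L u))) atTop (𝓝 0) := by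
      simpa using hq.const_mul (1/2 : ℝ)
    apply h3.congr'
    filter_upwards [eventually_gt_atTop (0:ℝ), hL.eventually_gt_atTop 0] with u hu hLu
    rw [Real.log_div (by positivity) (by positivity),
      Real.log_mul two_ne_zero (ne_of_gt hLu), Real.log_pow]
    push_cast
    ring
  -- part (c)
  have hconst : (a - 1) * Real.log 2 + 2 * K + 4 * Real.log τ
      - 2 * Real.log (c * 2 ^ (1 / α₁ + 1 / α₂) / (2 * Real.sqrt π)) = 0 := by
    have hpow2 : (0:ℝ) < (2:ℝ) ^ (1 / α₁ + 1 / α₂) :=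
      Real.rpow_pos_of_pos two_pos _
    rw [hKdef, ha', Real.log_div (by positivity) (by positivity),
      Real.log_mul (ne_of_gt hc) (ne_of_gt hpow2),
      Real.log_rpow two_pos,
      Real.log_mul two_ne_zero (by positivity),
      Real.log_sqrt pi_pos.le,
      Real.log_sqrt (by positivity : (0:ℝ) ≤ 2 * π),
      Real.log_mul two_ne_zero (ne_of_gt pi_pos), Real.log_pow]
    push_cast
    ring
  have partc : Tendsto (fun u : ℝ => u ^ 2 - (2 * L u + (a - 1) * Real.log (L u)
      - 4 * Real.log τ
      + 2 * Real.log (c * 2 ^ (1 / α₁ + 1 / α₂) / (2 * Real.sqrt π)))) atTop (𝓝 0) := by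
    have h4 : Tendsto (fun u : ℝ => 2 * (a - 1) * (Real.log u - (1 / 2 * Real.log 2
        + 1 / 2 * Real.log (L u))) + 2 * D u + ((a - 1) * Real.log 2 + 4 * Real.log τ
        - 2 * Real.log (c * 2 ^ (1 / α₁ + 1 / α₂) / (2 * Real.sqrt π)))) atTop
        (𝓝 (2 * (a - 1) * 0 + 2 * K + ((a - 1) * Real.log 2 + 4 * Real.log τ
        - 2 * Real.log (c * 2 ^ (1 / α₁ + 1 / α₂) / (2 * Real.sqrt π))))) :=
      ((partb.const_mul (2 * (a - 1))).add (hD.const_mul 2)).add tendsto_const_nhds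
    rw [show 2 * (a - 1) * 0 + 2 * K + ((a - 1) * Real.log 2 + 4 * Real.log τ
        - 2 * Real.log (c * 2 ^ (1 / α₁ + 1 / α₂) / (2 * Real.sqrt π))) = 0 by
      linarith [hconst]] at h4
    apply h4.congr
    intro u
    simp only [hDdef]
    ring
  refine ⟨parta, by simpa using partb, by simpa using partc⟩
end
end

section
/- Let β ∈ ℝ and c ∈ ℝ be constants, and let v(u) be a function with v(u) = u + c/u + o(1/u) as u → ∞. Then ( v(u)^β · Ψ(v(u)) ) / ( u^β · Ψ(u) ) → e^{−c} as u → ∞. -/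
open MeasureTheory ProbabilityTheory Filter Set Topology Asymptotics

noncomputable section

namespace S14

noncomputable def phi (x : ℝ) : ℝ := (Real.sqrt (2 * Real.pi))⁻¹ * Real.exp (-x^2/2)

lemma phi_pos (x : ℝ) : 0 < phi x := by
  have h := Real.pi_pos
  unfold phi; positivity

lemma gaussianPDFReal_eq : gaussianPDFReal 0 1 = phi := by
  ext x
  simp [gaussianPDFReal, phi]

lemma surv_eq (u : ℝ) : stdGaussSurvival u = ∫ x in Ioi u, phi x := by
  rw [stdGaussSurvival, gaussianReal_apply_eq_integral 0 one_ne_zero,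
    ENNReal.toReal_ofReal (integral_nonneg fun x => gaussianPDFReal_nonneg _ _ _),
    gaussianPDFReal_eq]

lemma integrable_phi : Integrable phi := gaussianPDFReal_eq ▸ integrable_gaussianPDFReal 0 1

lemma hasDerivAt_phi (x : ℝ) : HasDerivAt phi (-x * phi x) x := by
  have h1 : HasDerivAt (fun y : ℝ => -y^2/2) (-x) x := by
    have := ((hasDerivAt_pow 2 x).neg.div_const 2)
    refine this.congr_deriv ?_
    push_cast; ring
  have h2 := (h1.exp).const_mul (Real.sqrt (2*Real.pi))⁻¹
  refine (show HasDerivAt phi _ x from h2).congr_deriv ?_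
  unfold phi; ring

lemma phi_tendsto : Tendsto phi atTop (𝓝 0) := by
  have h1 : Tendsto (fun x : ℝ => -x^2/2) atTop atBot := by
    apply Filter.Tendsto.atBot_div_const two_pos
    exact tendsto_neg_atBot_iff.mpr (tendsto_pow_atTop two_ne_zero)
  have h : Tendsto (fun x : ℝ => Real.exp (-x^2/2)) atTop (𝓝 0) :=
    Real.tendsto_exp_atBot.comp h1
  have := h.const_mul (Real.sqrt (2*Real.pi))⁻¹
  rw [mul_zero] at this
  exact this

lemma intA {u : ℝ} (hu : 0 < u) :
    IntegrableOn (fun x => x * phi x) (Ioi u) ∧ ∫ x in Ioi u, x * phi x = phi u := by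
  have hderiv : ∀ x ∈ Ici u, HasDerivAt (fun y => -phi y) (x * phi x) x := by
    intro x _
    have := (hasDerivAt_phi x).neg
    refine this.congr_deriv ?_; ring
  have hpos : ∀ x ∈ Ioi u, 0 ≤ x * phi x := fun x hx =>
    mul_nonneg (le_of_lt (hu.trans hx)) (phi_pos x).le
  have htend : Tendsto (fun y => -phi y) atTop (𝓝 0) := by
    have := phi_tendsto.neg; simpa using this
  refine ⟨integrableOn_Ioi_deriv_of_nonneg' hderiv hpos htend, ?_⟩
  rw [integral_Ioi_of_hasDerivAt_of_nonneg' hderiv hpos htend]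
  simp

lemma intB {u : ℝ} (hu : 2 ≤ u) :
    IntegrableOn (fun x => (1 - 3/x^4) * phi x) (Ioi u) ∧
      ∫ x in Ioi u, (1 - 3/x^4) * phi x = (1/u - 1/u^3) * phi u := by
  have hu0 : 0 < u := lt_of_lt_of_le two_pos hu
  have hderiv : ∀ x ∈ Ici u, HasDerivAt (fun y => -((1/y - 1/y^3) * phi y))
      ((1 - 3/x^4) * phi x) x := by
    intro x hx
    have hx0 : x ≠ 0 := ne_of_gt (lt_of_lt_of_le hu0 hx)
    have h1 : HasDerivAt (fun y : ℝ => 1/y - 1/y^3) (-1/x^2 + 3/x^4) x := by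
      have ha : HasDerivAt (fun y : ℝ => 1/y) (-1/x^2) x := by
        have := hasDerivAt_inv hx0
        simpa [one_div, neg_div] using this
      have hb : HasDerivAt (fun y : ℝ => 1/y^3) (-3/x^4) x := by
        have := HasDerivAt.comp (h := fun y : ℝ => y ^ 3) x (hasDerivAt_inv (pow_ne_zero 3 hx0))
          (hasDerivAt_pow 3 x)
        refine (show HasDerivAt (fun y : ℝ => 1/y^3) _ x by
          simpa [one_div, Function.comp_def] using this).congr_deriv ?_
        field_simp
      have := ha.sub hb
      refine this.congr_deriv ?_; ring
    have h2 := (h1.mul (hasDerivAt_phi x)).neg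
    refine h2.congr_deriv ?_
    field_simp
    ring
  have hpos : ∀ x ∈ Ioi u, 0 ≤ (1 - 3/x^4) * phi x := by
    intro x hx
    have hx2 : (2:ℝ) ≤ x := hu.trans (le_of_lt hx)
    have h16 : (16:ℝ) ≤ x^4 := by
      calc (16:ℝ) = 2^4 := by norm_num
        _ ≤ x^4 := pow_le_pow_left₀ (by norm_num) hx2 4
    have : 3/x^4 ≤ 1 := by
      rw [div_le_one (by positivity)]; linarith
    exact mul_nonneg (by linarith) (phi_pos x).le
  have htend : Tendsto (fun y => -((1/y - 1/y^3) * phi y)) atTop (𝓝 0) := by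
    have h1 : Tendsto (fun y : ℝ => 1/y - 1/y^3) atTop (𝓝 0) := by
      have ha : Tendsto (fun y : ℝ => 1/y) atTop (𝓝 0) := by
        simpa [one_div] using tendsto_inv_atTop_zero
      have hb : Tendsto (fun y : ℝ => 1/y^3) atTop (𝓝 0) := by
        have h3 := (ha.mul ha).mul ha
        norm_num at h3
        exact h3.congr fun y => by ring
      simpa using ha.sub hb
    have := (h1.mul phi_tendsto).neg
    simpa using this
  refine ⟨integrableOn_Ioi_deriv_of_nonneg' hderiv hpos htend, ?_⟩
  rw [integral_Ioi_of_hasDerivAt_of_nonneg' hderiv hpos htend]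
  simp

lemma surv_pos (u : ℝ) : 0 < stdGaussSurvival u := by
  rw [stdGaussSurvival]
  refine ENNReal.toReal_pos ?_ (measure_ne_top _ _)
  intro h
  have := (gaussianReal_absolutelyContinuous' 0 one_ne_zero) h
  rw [Real.volume_Ioi] at this
  exact ENNReal.top_ne_zero this

lemma surv_le {u : ℝ} (hu : 0 < u) : stdGaussSurvival u ≤ phi u / u := by
  rw [surv_eq]
  have h1 : ∫ x in Ioi u, phi x ≤ ∫ x in Ioi u, u⁻¹ * (x * phi x) := by
    refine setIntegral_mono_on integrable_phi.integrableOn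
      ((intA hu).1.const_mul u⁻¹) measurableSet_Ioi ?_
    intro x hx
    have hx0 : u < x := hx
    have : phi x * 1 ≤ phi x * (u⁻¹ * x) := by
      refine mul_le_mul_of_nonneg_left ?_ (phi_pos x).le
      rw [← div_eq_inv_mul, le_div_iff₀ hu]
      linarith
    calc phi x = phi x * 1 := (mul_one _).symm
      _ ≤ phi x * (u⁻¹ * x) := this
      _ = u⁻¹ * (x * phi x) := by ring
  rw [integral_const_mul, (intA hu).2] at h1
  rw [div_eq_inv_mul]
  exact h1

lemma surv_ge {u : ℝ} (hu : 2 ≤ u) : (1/u - 1/u^3) * phi u ≤ stdGaussSurvival u := by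
  rw [surv_eq, ← (intB hu).2]
  refine setIntegral_mono_on (intB hu).1 integrable_phi.integrableOn measurableSet_Ioi ?_
  intro x hx
  have hx0 : 0 < x := lt_of_lt_of_le (lt_of_lt_of_le two_pos hu) (le_of_lt hx)
  have : (1 - 3/x^4) ≤ 1 := by
    have : 0 ≤ 3/x^4 := by positivity
    linarith
  calc (1 - 3/x^4) * phi x ≤ 1 * phi x := mul_le_mul_of_nonneg_right this (phi_pos x).le
    _ = phi x := one_mul _

lemma mills : Tendsto (fun u => u * stdGaussSurvival u / phi u) atTop (𝓝 1) := by
  have hlo : Tendsto (fun u : ℝ => 1 - 1/u^2) atTop (𝓝 1) := by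
    have h1 : Tendsto (fun u : ℝ => 1/u^2) atTop (𝓝 0) := by
      have ha : Tendsto (fun y : ℝ => 1/y) atTop (𝓝 0) := by
        simpa [one_div] using tendsto_inv_atTop_zero
      have := ha.mul ha
      norm_num at this
      exact this.congr fun y => by ring
    simpa using tendsto_const_nhds.sub h1
  refine tendsto_of_tendsto_of_tendsto_of_le_of_le' hlo tendsto_const_nhds ?_ ?_
  · filter_upwards [eventually_ge_atTop (2:ℝ)] with u hu
    have hu0 : 0 < u := lt_of_lt_of_le two_pos hu
    rw [le_div_iff₀ (phi_pos u)]
    have := surv_ge hu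
    have h2 : (1 - 1/u^2) * phi u = u * ((1/u - 1/u^3) * phi u) := by
      field_simp
    rw [h2]
    exact mul_le_mul_of_nonneg_left this hu0.le
  · filter_upwards [eventually_ge_atTop (2:ℝ)] with u hu
    have hu0 : 0 < u := lt_of_lt_of_le two_pos hu
    rw [div_le_one (phi_pos u)]
    have := surv_le hu0
    calc u * stdGaussSurvival u ≤ u * (phi u / u) :=
      mul_le_mul_of_nonneg_left this hu0.le
      _ = phi u := by field_simp

end S14

open S14

/-- If `v(u) = u + c/u + o(1/u)` as `u → ∞`, then
`(v(u)^β·Ψ(v(u)))/(u^β·Ψ(u)) → e^{-c}`. -/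
theorem statement14 (β c : ℝ) (v : ℝ → ℝ)
    (hv : (fun u => v u - u - c / u) =o[atTop] (fun u : ℝ => 1 / u)) :
    Tendsto (fun u => (v u ^ β * stdGaussSurvival (v u)) /
        (u ^ β * stdGaussSurvival u)) atTop (𝓝 (Real.exp (-c))) := by
  set ε : ℝ → ℝ := fun u => v u - u - c / u with hε_def
  have ha : Tendsto (fun y : ℝ => 1/y) atTop (𝓝 0) := by
    simpa [one_div] using tendsto_inv_atTop_zero
  have h0 : Tendsto (fun u => ε u * u) atTop (𝓝 0) := by
    have := hv.tendsto_div_nhds_zero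
    refine this.congr fun u => ?_
    rw [div_eq_mul_inv, one_div, inv_inv]
  have hε : Tendsto ε atTop (𝓝 0) := by
    have h1 := h0.mul ha
    rw [zero_mul] at h1
    refine h1.congr' ?_
    filter_upwards [eventually_ge_atTop (1:ℝ)] with u hu
    have hu0 : u ≠ 0 := by positivity
    field_simp
  have hc : Tendsto (fun u : ℝ => c / u) atTop (𝓝 0) := by
    have := ha.const_mul c
    rw [mul_zero] at this
    exact this.congr fun u => by rw [mul_one_div]
  have hvtop : Tendsto v atTop atTop := by
    have ht : Tendsto (fun u => c / u + ε u) atTop (𝓝 (0 + 0)) := hc.add hε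
    have := Filter.Tendsto.atTop_add tendsto_id ht
    refine this.congr fun u => ?_
    simp only [hε_def, id]; ring
  have h1sq : Tendsto (fun u : ℝ => 1/u^2) atTop (𝓝 0) := by
    have := ha.mul ha
    rw [mul_zero] at this
    exact this.congr fun y => by ring
  have hvdivu : Tendsto (fun u => v u / u) atTop (𝓝 1) := by
    have ht : Tendsto (fun u => 1 + (c + ε u * u) * (1/u^2)) atTop
        (𝓝 (1 + (c + 0) * 0)) :=
      tendsto_const_nhds.add ((tendsto_const_nhds.add h0).mul h1sq)
    rw [show (1 : ℝ) + (c + 0) * 0 = 1 by ring] at ht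
    refine ht.congr' ?_
    filter_upwards [eventually_ge_atTop (1:ℝ)] with u hu
    have hu0 : u ≠ 0 := by positivity
    simp only [hε_def]
    field_simp
    ring
  have hudivv : Tendsto (fun u => u / v u) atTop (𝓝 1) := by
    have := hvdivu.inv₀ one_ne_zero
    rw [inv_one] at this
    exact this.congr fun u => by rw [inv_div]
  have hrpow : Tendsto (fun u => (v u / u) ^ β) atTop (𝓝 1) := by
    have := hvdivu.rpow_const (p := β) (Or.inl one_ne_zero)
    rwa [Real.one_rpow] at this
  have hexp : Tendsto (fun u => Real.exp ((u^2 - (v u)^2)/2)) atTop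
      (𝓝 (Real.exp (-c))) := by
    have hw : Tendsto (fun u => c / u + ε u) atTop (𝓝 (0 + 0)) := hc.add hε
    rw [add_zero] at hw
    have hin : Tendsto (fun u => -(2*(c + ε u * u) + (c/u + ε u)^2)/2) atTop
        (𝓝 (-(2*(c + 0) + 0^2)/2)) :=
      (((((tendsto_const_nhds.add h0)).const_mul 2).add (hw.pow 2)).neg).div_const 2
    rw [show -(2*(c + 0) + (0:ℝ)^2)/2 = -c by ring] at hin
    have hcomp := (Real.continuous_exp.tendsto (-c)).comp hin
    refine hcomp.congr' ?_
    filter_upwards [eventually_ge_atTop (1:ℝ)] with u hu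
    have hu0 : u ≠ 0 := by positivity
    simp only [Function.comp, hε_def]
    congr 1
    field_simp
    ring
  have millsv : Tendsto (fun u => v u * stdGaussSurvival (v u) / phi (v u)) atTop (𝓝 1) :=
    mills.comp hvtop
  have hquot : Tendsto (fun u =>
      (v u * stdGaussSurvival (v u) / phi (v u)) / (u * stdGaussSurvival u / phi u))
      atTop (𝓝 1) := by
    have := millsv.div mills one_ne_zero
    rwa [div_one] at this
  have key : Tendsto (fun u => (v u / u) ^ β *
      ((v u * stdGaussSurvival (v u) / phi (v u)) / (u * stdGaussSurvival u / phi u)) *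
      (u / v u) * Real.exp ((u^2 - (v u)^2)/2)) atTop (𝓝 (Real.exp (-c))) := by
    have := ((hrpow.mul hquot).mul hudivv).mul hexp
    rwa [one_mul, one_mul, one_mul] at this
  refine Tendsto.congr' ?_ key
  filter_upwards [eventually_gt_atTop (0:ℝ), hvtop.eventually (eventually_gt_atTop (0:ℝ))]
    with u hu0 hv0
  have hphiu := phi_pos u
  have hphiv := phi_pos (v u)
  have hsu := surv_pos u
  have hsv := surv_pos (v u)
  have hexp_eq : Real.exp ((u^2 - (v u)^2)/2) = phi (v u) / phi u := by
    unfold phi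
    rw [mul_div_mul_left _ _ (inv_ne_zero (by positivity : Real.sqrt (2*Real.pi) ≠ 0)),
      ← Real.exp_sub]
    congr 1
    ring
  have hrpow_eq : (v u / u) ^ β = (v u) ^ β / u ^ β :=
    Real.div_rpow hv0.le hu0.le β
  rw [hexp_eq, hrpow_eq]
  have hub : (0:ℝ) < u ^ β := Real.rpow_pos_of_pos hu0 β
  have hvb : (0:ℝ) < (v u) ^ β := Real.rpow_pos_of_pos hv0 β
  field_simp
end
end
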